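/- Let α(z) = z/(1+√(1−z))² for z in the open unit disc. Then α is injective on the open unit disc, its image is a neighborhood of 0, and its inverse is given by α⁻¹(w) = 4w/(1+w)², i.e. α(4w/(1+w)²) = w for w in a neighborhood of 0. -/

import Mathlib

open Complex Metric

noncomputable def alphaMap (z : ℂ) : ℂ := z / (1 + (1 - z) ^ ((1 : ℂ) / 2)) ^ 2

lemma re_sqrt_pos {x : ℂ} (hx : 0 < x.re) : 0 < (x ^ ((1 : ℂ)/2)).re := by
  have hx0 : x ≠ 0 := fun h => by simp [h] at hx
  rw [Complex.cpow_def_of_ne_zero hx0, Complex.exp_re]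
  have harg : |x.arg| < Real.pi / 2 :=
    Complex.abs_arg_lt_pi_div_two_iff.2 (Or.inl hx)
  have him : (Complex.log x * ((1 : ℂ)/2)).im = x.arg / 2 := by
    simp [Complex.mul_im, Complex.log_im]
    ring
  rw [him]
  have hcos : 0 < Real.cos (x.arg / 2) := by
    apply Real.cos_pos_of_mem_Ioo
    constructor
    · cases abs_lt.1 harg with
      | intro h1 h2 => linarith
    · cases abs_lt.1 harg with
      | intro h1 h2 =>
        have := Real.pi_pos
        linarith
  positivity

lemma sqrt_sq {x : ℂ} (hx : 0 < x.re) : (x ^ ((1 : ℂ)/2)) ^ 2 = x := by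
  rw [one_div]
  exact Complex.cpow_ofNat_inv_pow x 2

lemma one_add_sqrt_ne {x : ℂ} (hx : 0 < x.re) : 1 + x ^ ((1 : ℂ)/2) ≠ 0 := by
  intro h
  have h2 : x ^ ((1 : ℂ)/2) = -1 := by linear_combination h
  have := re_sqrt_pos hx
  rw [h2] at this
  simp at this
  linarith

theorem stmt4 :
    Set.InjOn alphaMap (Metric.ball (0 : ℂ) 1) ∧
    alphaMap '' Metric.ball (0 : ℂ) 1 ∈ nhds (0 : ℂ) ∧
    ∃ ε > (0 : ℝ), ∀ w : ℂ, ‖w‖ < ε → alphaMap (4 * w / (1 + w) ^ 2) = w := by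
  have hre : ∀ z : ℂ, z ∈ Metric.ball (0 : ℂ) 1 → 0 < (1 - z).re := by
    intro z hz
    rw [Metric.mem_ball, dist_zero_right] at hz
    have := Complex.abs_re_le_norm z
    have : z.re < 1 := lt_of_le_of_lt (le_abs_self z.re |>.trans this) hz
    simp [Complex.sub_re]
    linarith
  -- key computation
  have hkey : ∀ w : ℂ, ‖w‖ < 1/8 → alphaMap (4 * w / (1 + w) ^ 2) = w := by
    intro w hw
    have h1 : (1 : ℂ) + w ≠ 0 := by
      intro h
      have : ‖w‖ = 1 := by
        have : w = -1 := by linear_combination h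
        simp [this]
      linarith
    have hnsq : Complex.normSq w < 1 := by
      have := Complex.sq_norm w
      nlinarith [norm_nonneg w]
    set t : ℂ := (1 - w) / (1 + w) with ht_def
    have ht : 0 < t.re := by
      rw [ht_def, Complex.div_re, ← add_div]
      have hpos : 0 < Complex.normSq (1 + w) := by
        rwa [Complex.normSq_pos]
      apply div_pos _ hpos
      simp [Complex.sub_re, Complex.sub_im, Complex.add_re, Complex.add_im,
        Complex.normSq_apply] at *
      nlinarith
    have h2 : 1 - 4 * w / (1 + w) ^ 2 = t ^ 2 := by
      rw [ht_def]
      field_simp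
      ring
    have h3 : (1 - 4 * w / (1 + w) ^ 2) ^ ((1 : ℂ)/2) = t := by
      rw [h2, one_div]
      exact Complex.sq_cpow_two_inv ht
    have h4 : 1 + t = 2 / (1 + w) := by
      rw [ht_def]
      field_simp
      ring
    unfold alphaMap
    rw [h3, h4]
    field_simp
    ring
  refine ⟨?_, ?_, ⟨1/8, by norm_num, hkey⟩⟩
  · -- injectivity
    intro z₁ hz₁ z₂ hz₂ h
    have h₁ := hre z₁ hz₁
    have h₂ := hre z₂ hz₂
    set s₁ := (1 - z₁) ^ ((1 : ℂ)/2) with hs₁def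
    set s₂ := (1 - z₂) ^ ((1 : ℂ)/2) with hs₂def
    have hs₁ : s₁ ^ 2 = 1 - z₁ := sqrt_sq h₁
    have hs₂ : s₂ ^ 2 = 1 - z₂ := sqrt_sq h₂
    have hn₁ : (1 : ℂ) + s₁ ≠ 0 := one_add_sqrt_ne h₁
    have hn₂ : (1 : ℂ) + s₂ ≠ 0 := one_add_sqrt_ne h₂
    unfold alphaMap at h
    rw [← hs₁def, ← hs₂def] at h
    rw [div_eq_div_iff (pow_ne_zero 2 hn₁) (pow_ne_zero 2 hn₂)] at h
    have hz₁' : z₁ = 1 - s₁ ^ 2 := by linear_combination hs₁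
    have hz₂' : z₂ = 1 - s₂ ^ 2 := by linear_combination hs₂
    rw [hz₁', hz₂'] at h
    have hfac : (1 + s₁) * (1 + s₂) * ((1 - s₁) * (1 + s₂) - (1 - s₂) * (1 + s₁)) = 0 := by
      linear_combination h
    have hfac2 : (1 - s₁) * (1 + s₂) - (1 - s₂) * (1 + s₁) = 0 := by
      rcases mul_eq_zero.1 hfac with h' | h'
      · exact absurd h' (mul_ne_zero hn₁ hn₂)
      · exact h'
    have hs : s₁ = s₂ := by linear_combination -hfac2/2
    have : 1 - z₁ = 1 - z₂ := by rw [← hs₁, ← hs₂, hs]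
    linear_combination -this
  · -- image is a neighborhood of 0
    apply Filter.mem_of_superset (Metric.ball_mem_nhds (0 : ℂ) (by norm_num : (0:ℝ) < 1/8))
    intro w hw
    rw [Metric.mem_ball, dist_zero_right] at hw
    refine ⟨4 * w / (1 + w) ^ 2, ?_, hkey w hw⟩
    rw [Metric.mem_ball, dist_zero_right]
    have h1 : 1 - ‖w‖ ≤ ‖1 + w‖ := by
      have := norm_add_le (1 + w) (-w)
      simp at this
      linarith
    have hb : (0:ℝ) < ‖1 + w‖ := by linarith
    have : ‖4 * w / (1 + w) ^ 2‖ = 4 * ‖w‖ / (‖1 + w‖) ^ 2 := by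
      simp [map_div₀, map_pow]
    rw [this, div_lt_one (by positivity)]
    nlinarith [norm_nonneg w,
      mul_self_le_mul_self (by linarith : (0:ℝ) ≤ 1 - ‖w‖) h1]
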